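/- Let $K \subset \mathbb{R}^2$ be a compact convex body whose support function $h(\vartheta) = \sup_{y \in K} \langle (\cos\vartheta, \sin\vartheta), y \rangle$ is twice continuously differentiable with $h(\vartheta) + h''(\vartheta) > 0$ for all $\vartheta$. Fix $\vartheta_0 \in \mathbb{R}$ and let $i(\vartheta) = h(\vartheta) n_\vartheta - \big(\int_{\vartheta_0}^{\vartheta} h(\tau)\,d\tau - h'(\vartheta_0)\big) t_\vartheta$ be the left involute of $\partial K$ starting at $i(\vartheta_0)$. Then for every $y \in K$, the function $\vartheta \mapsto \|i(\vartheta) - y\|$ is nondecreasing on $[\vartheta_0, \infty)$ (the involute has the distancing-from-$K$ property). -/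

import Mathlib

open Real MeasureTheory

noncomputable def vec2 (a b : ℝ) : EuclideanSpace ℝ (Fin 2) :=
  (WithLp.equiv 2 (Fin 2 → ℝ)).symm ![a, b]

/-- The outer normal direction `n_ϑ = (cos ϑ, sin ϑ)`. -/
noncomputable def nvec (θ : ℝ) : EuclideanSpace ℝ (Fin 2) := vec2 (Real.cos θ) (Real.sin θ)

/-- The tangent direction `t_ϑ = (-sin ϑ, cos ϑ)`. -/
noncomputable def tvec (θ : ℝ) : EuclideanSpace ℝ (Fin 2) := vec2 (-Real.sin θ) (Real.cos θ)

lemma vec2_eq (a b : ℝ) : vec2 a b = a • vec2 1 0 + b • vec2 0 1 := by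
  ext i; fin_cases i <;> simp [vec2]

lemma inner_vec2 (a b c d : ℝ) : (inner ℝ (vec2 a b) (vec2 c d) : ℝ) = a * c + b * d := by
  simp [vec2, PiLp.inner_apply, Fin.sum_univ_two]; ring

lemma nvec_eq (θ : ℝ) : nvec θ = Real.cos θ • vec2 1 0 + Real.sin θ • vec2 0 1 := by
  rw [nvec]; exact vec2_eq _ _

lemma tvec_eq (θ : ℝ) : tvec θ = (-Real.sin θ) • vec2 1 0 + Real.cos θ • vec2 0 1 := by
  rw [tvec]; exact vec2_eq _ _

lemma hasDerivAt_nvec (θ : ℝ) : HasDerivAt nvec (tvec θ) θ := by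
  have e : nvec = fun t => Real.cos t • vec2 1 0 + Real.sin t • vec2 0 1 := funext nvec_eq
  rw [e, tvec_eq]
  exact ((Real.hasDerivAt_cos θ).smul_const (vec2 1 0)).add
    ((Real.hasDerivAt_sin θ).smul_const (vec2 0 1))

lemma hasDerivAt_tvec (θ : ℝ) : HasDerivAt tvec (-nvec θ) θ := by
  have e : tvec = fun t => (-Real.sin t) • vec2 1 0 + Real.cos t • vec2 0 1 := funext tvec_eq
  have heq : -nvec θ = (-Real.cos θ) • vec2 1 0 + (-Real.sin θ) • vec2 0 1 := by
    rw [nvec_eq]; module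
  rw [e, heq]
  exact (((Real.hasDerivAt_sin θ).neg).smul_const (vec2 1 0)).add
    ((Real.hasDerivAt_cos θ).smul_const (vec2 0 1))

lemma inner_nvec_nvec (θ : ℝ) : (inner ℝ (nvec θ) (nvec θ) : ℝ) = 1 := by
  rw [nvec, inner_vec2]; rw [← Real.sin_sq_add_cos_sq θ]; ring

lemma inner_nvec_tvec (θ : ℝ) : (inner ℝ (nvec θ) (tvec θ) : ℝ) = 0 := by
  rw [nvec, tvec, inner_vec2]; ring

set_option maxHeartbeats 1000000 in
/-- The left involute of `∂K` has the distancing-from-`K` property: for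
every `y ∈ K`, the distance `ϑ ↦ ‖i(ϑ) - y‖` is nondecreasing on `[ϑ₀, ∞)`. -/
theorem stmt_9 (K : Set (EuclideanSpace ℝ (Fin 2)))
    (hne : K.Nonempty) (hcp : IsCompact K) (hcv : Convex ℝ K)
    (h : ℝ → ℝ)
    (hsupp : ∀ θ : ℝ, IsLUB ((fun y => (inner ℝ (nvec θ) y : ℝ)) '' K) (h θ))
    (hsm : ContDiff ℝ 2 h) (hpos : ∀ θ, 0 < h θ + deriv (deriv h) θ)
    (θ₀ : ℝ) (i : ℝ → EuclideanSpace ℝ (Fin 2))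
    (hi : ∀ θ, i θ = h θ • nvec θ - ((∫ τ in θ₀..θ, h τ) - deriv h θ₀) • tvec θ) :
    ∀ y ∈ K, MonotoneOn (fun θ => ‖i θ - y‖) (Set.Ici θ₀) := by
  intro y hy
  have hcont : Continuous h := hsm.continuous
  have hdiff : Differentiable ℝ h := hsm.differentiable (by norm_num)
  have hd1 : ContDiff ℝ 1 (deriv h) := by
    have : ContDiff ℝ ((1 : ℕ) + 1) h := by exact_mod_cast hsm
    exact ((contDiff_succ_iff_deriv.mp this).2.2)
  have hdiff' : Differentiable ℝ (deriv h) := hd1.differentiable (by norm_num)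
  set g : ℝ → ℝ := fun θ => (∫ τ in θ₀..θ, h τ) - deriv h θ₀ with hgdef
  have hg' : ∀ θ, HasDerivAt g (h θ) θ := fun θ =>
    ((hcont.integral_hasStrictDerivAt θ₀ θ).hasDerivAt).sub_const _
  set φ : ℝ → ℝ := fun θ => deriv h θ + g θ with hφdef
  have hφ' : ∀ θ, HasDerivAt φ (deriv (deriv h) θ + h θ) θ := fun θ =>
    ((hdiff' θ).hasDerivAt).add (hg' θ)
  have hφ0 : φ θ₀ = 0 := by simp [hφdef, hgdef]
  have hφmono : MonotoneOn φ (Set.Ici θ₀) := by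
    apply monotoneOn_of_deriv_nonneg (convex_Ici θ₀)
      (fun x _ => ((hφ' x).differentiableAt).continuousAt.continuousWithinAt)
      (fun x _ => ((hφ' x).differentiableAt).differentiableWithinAt)
    intro x _
    rw [(hφ' x).deriv]
    have := hpos x; linarith
  have hφnn : ∀ θ ∈ Set.Ici θ₀, 0 ≤ φ θ := fun θ hθ => by
    have := hφmono (Set.self_mem_Ici) hθ hθ
    rwa [hφ0] at this
  -- derivative of i
  have hi' : ∀ θ, HasDerivAt i (φ θ • nvec θ) θ := by
    intro θ
    have e : i = fun t => h t • nvec t - g t • tvec t := by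
      funext t; rw [hi t]
    rw [e]
    have H1 : HasDerivAt (fun t => h t • nvec t)
        (h θ • tvec θ + deriv h θ • nvec θ) θ :=
      ((hdiff θ).hasDerivAt).smul (hasDerivAt_nvec θ)
    have H2 : HasDerivAt (fun t => g t • tvec t)
        (g θ • (-nvec θ) + h θ • tvec θ) θ :=
      (hg' θ).smul (hasDerivAt_tvec θ)
    have := H1.sub H2
    have heq : h θ • tvec θ + deriv h θ • nvec θ - (g θ • (-nvec θ) + h θ • tvec θ)
        = φ θ • nvec θ := by rw [hφdef]; module
    rwa [heq] at this
  -- inner product nonneg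
  have hinner : ∀ θ, (inner ℝ (nvec θ) (i θ - y) : ℝ) = h θ - inner ℝ (nvec θ) y := by
    intro θ
    rw [hi θ, inner_sub_right, inner_sub_right, real_inner_smul_right,
      real_inner_smul_right, inner_nvec_nvec, inner_nvec_tvec]
    ring
  have hle : ∀ θ, (inner ℝ (nvec θ) y : ℝ) ≤ h θ := fun θ =>
    (hsupp θ).1 ⟨y, hy, rfl⟩
  -- squared distance function
  set F : ℝ → ℝ := fun θ => (inner ℝ (i θ - y) (i θ - y) : ℝ) with hFdef
  have hF' : ∀ θ, HasDerivAt F (2 * φ θ * (h θ - inner ℝ (nvec θ) y)) θ := by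
    intro θ
    have hx : HasDerivAt (fun t => i t - y) (φ θ • nvec θ) θ := (hi' θ).sub_const y
    have := hx.inner ℝ hx
    have heq : (inner ℝ (i θ - y) (φ θ • nvec θ) : ℝ) + inner ℝ (φ θ • nvec θ) (i θ - y)
        = 2 * φ θ * (h θ - inner ℝ (nvec θ) y) := by
      have c1 : (inner ℝ (i θ - y) (nvec θ) : ℝ) = h θ - inner ℝ (nvec θ) y :=
        (real_inner_comm _ _).trans (hinner θ)
      simp only [real_inner_smul_right, real_inner_smul_left, c1, hinner θ]
      ring
    rwa [heq] at this
  have hFmono : MonotoneOn F (Set.Ici θ₀) := by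
    apply monotoneOn_of_deriv_nonneg (convex_Ici θ₀)
      (fun x _ => ((hF' x).differentiableAt).continuousAt.continuousWithinAt)
      (fun x _ => ((hF' x).differentiableAt).differentiableWithinAt)
    intro x hx
    rw [interior_Ici] at hx
    rw [(hF' x).deriv]
    have h1 : 0 ≤ φ x := hφnn x (Set.mem_Ici.mpr (le_of_lt hx))
    have h2 : 0 ≤ h x - inner ℝ (nvec x) y := sub_nonneg.mpr (hle x)
    positivity
  intro a ha b hb hab
  have := hFmono ha hb hab
  rw [hFdef] at this
  simp only [real_inner_self_eq_norm_sq] at this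
  exact (pow_le_pow_iff_left₀ (norm_nonneg _) (norm_nonneg _) two_ne_zero).mp this
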